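/- arXiv:2010.02398 — 7 statements merged into one kernel-verified Lean document; each statement's English description precedes it below -/
import Mathlib

section
/- In the edge-removal setup, for every path r in S^c (a path not passing through node i), the post-removal choice probability is strictly smaller than the pre-removal choice probability, i.e. P̄_r < P_r, if and only if κ > log(P(S)/P(S_a)) / log(m/(m-1)). (Proposition 1: removing an edge a at node i decreases the probability of every path not passing through i exactly when the choice aversion parameter κ at node i exceeds this threshold.) -/
open Real Finset

/-- **Proposition 1** (failure of regularity).  In the edge-removal setup,
for every path `r ∈ Sᶜ` (not passing through node `i`), the post-removal
logit probability is strictly smaller than the pre-removal one iff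
`κ > log(P(S)/P(Sa)) / log(m/(m-1))`. -/
theorem regularity_failure_characterization
    {R : Type*} [Fintype R] [DecidableEq R]
    (U : R → ℝ) (S Sa : Finset R)
    (hS : S.Nonempty) (hSc : Sᶜ.Nonempty)
    (hSaS : Sa ⊆ S) (hSa : Sa.Nonempty)
    (m : ℕ) (hm : 2 ≤ m) (κ : ℝ) (hκ : 0 ≤ κ)
    (P : R → ℝ)
    (hP : ∀ r, P r = Real.exp (U r) / ∑ r' : R, Real.exp (U r'))
    (Δ : ℝ) (hΔ : Δ = κ * (Real.log ((m : ℝ) - 1) - Real.log (m : ℝ)))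
    (Ubar : R → ℝ)
    (hUbar₁ : ∀ r ∈ Sa, Ubar r = U r - Δ)
    (hUbar₂ : ∀ r ∈ Sᶜ, Ubar r = U r)
    (Pbar : R → ℝ)
    (hPbar : ∀ r ∈ Sa ∪ Sᶜ,
      Pbar r = Real.exp (Ubar r) / ∑ r' ∈ Sa ∪ Sᶜ, Real.exp (Ubar r')) :
    ∀ r ∈ Sᶜ,
      (Pbar r < P r ↔
        κ > Real.log ((∑ r' ∈ S, P r') / (∑ r' ∈ Sa, P r')) /
              Real.log ((m : ℝ) / ((m : ℝ) - 1))) := by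
  intro r hr
  have hm1 : (1:ℝ) ≤ (m:ℝ) - 1 := by
    have : (2:ℝ) ≤ (m:ℝ) := by exact_mod_cast hm
    linarith
  have hm1pos : (0:ℝ) < (m:ℝ) - 1 := by linarith
  have hmpos : (0:ℝ) < (m:ℝ) := by linarith
  set T := ∑ r' : R, Real.exp (U r') with hTdef
  have hTpos : 0 < T :=
    Finset.sum_pos (fun i _ => Real.exp_pos _) ⟨hS.choose, Finset.mem_univ _⟩
  have hA : (0:ℝ) < ∑ r' ∈ Sa, Real.exp (U r') :=
    Finset.sum_pos (fun i _ => Real.exp_pos _) hSa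
  have hB : (0:ℝ) < ∑ r' ∈ S, Real.exp (U r') :=
    Finset.sum_pos (fun i _ => Real.exp_pos _) hS
  have hAB : (∑ r' ∈ Sa, Real.exp (U r')) ≤ ∑ r' ∈ S, Real.exp (U r') :=
    Finset.sum_le_sum_of_subset_of_nonneg hSaS (fun i _ _ => (Real.exp_pos _).le)
  have hdisj : Disjoint Sa Sᶜ := by
    refine Finset.disjoint_left.mpr fun x hx hxc => ?_
    exact (Finset.mem_compl.mp hxc) (hSaS hx)
  have hDsum : ∑ r' ∈ Sa ∪ Sᶜ, Real.exp (Ubar r')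
      = Real.exp (-Δ) * (∑ r' ∈ Sa, Real.exp (U r')) + ∑ r' ∈ Sᶜ, Real.exp (U r') := by
    rw [Finset.sum_union hdisj, Finset.mul_sum]
    congr 1
    · refine Finset.sum_congr rfl fun x hx => ?_
      rw [hUbar₁ x hx, sub_eq_add_neg, add_comm, Real.exp_add]
    · exact Finset.sum_congr rfl fun x hx => by rw [hUbar₂ x hx]
  set D := ∑ r' ∈ Sa ∪ Sᶜ, Real.exp (Ubar r') with hDdef
  have hDpos : 0 < D := by
    rw [hDsum]
    positivity
  have hT_split : T = (∑ r' ∈ S, Real.exp (U r')) + ∑ r' ∈ Sᶜ, Real.exp (U r') := by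
    rw [hTdef, ← Finset.sum_add_sum_compl S]
  have hPbar' : Pbar r = Real.exp (U r) / D := by
    rw [hPbar r (Finset.mem_union_right _ hr), hUbar₂ r hr]
  -- Step 1: Pbar r < P r ↔ T < D
  have step1 : Pbar r < P r ↔ T < D := by
    rw [hPbar', hP r]
    exact div_lt_div_iff_of_pos_left (Real.exp_pos _) hDpos hTpos
  -- Step 2: T < D ↔ ∑_S exp < exp(-Δ) * ∑_Sa exp
  have step2 : T < D ↔ (∑ r' ∈ S, Real.exp (U r')) < Real.exp (-Δ) * ∑ r' ∈ Sa, Real.exp (U r') := by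
    rw [hDsum, hT_split]
    constructor <;> intro h <;> linarith
  -- Probabilities as sums
  have hPS : ∑ r' ∈ S, P r' = (∑ r' ∈ S, Real.exp (U r')) / T := by
    rw [Finset.sum_div]
    exact Finset.sum_congr rfl fun x _ => hP x
  have hPSa : ∑ r' ∈ Sa, P r' = (∑ r' ∈ Sa, Real.exp (U r')) / T := by
    rw [Finset.sum_div]
    exact Finset.sum_congr rfl fun x _ => hP x
  have hratio : (∑ r' ∈ S, P r') / (∑ r' ∈ Sa, P r')
      = (∑ r' ∈ S, Real.exp (U r')) / (∑ r' ∈ Sa, Real.exp (U r')) := by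
    rw [hPS, hPSa]
    field_simp
  have hL : Real.log ((m : ℝ) / ((m : ℝ) - 1)) = Real.log (m:ℝ) - Real.log ((m:ℝ) - 1) :=
    Real.log_div (ne_of_gt hmpos) (ne_of_gt hm1pos)
  have hLpos : 0 < Real.log ((m : ℝ) / ((m : ℝ) - 1)) := by
    apply Real.log_pos
    rw [lt_div_iff₀ hm1pos]
    linarith
  have hnegΔ : -Δ = κ * Real.log ((m : ℝ) / ((m : ℝ) - 1)) := by
    rw [hΔ, hL]; ring
  have hratiopos : 0 < (∑ r' ∈ S, Real.exp (U r')) / (∑ r' ∈ Sa, Real.exp (U r')) :=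
    div_pos hB hA
  rw [step1, step2, gt_iff_lt, hratio, div_lt_iff₀ hLpos,
    Real.log_lt_iff_lt_exp hratiopos, ← hnegΔ, div_lt_iff₀ hA]
end

section
/- In the edge-removal setup, if either S_a is a proper subset of S, or κ > 0 and S^c is nonempty, then for every surviving path r ∈ S_a through node i the post-removal probability strictly increases: P̄_r > P_r. (Removing an edge at node i always makes the surviving paths through i strictly more likely under choice aversion.) -/
open Real Finset

/-- In the edge-removal setup, if either `Sa ⊂ S`, or `κ > 0` and `Sᶜ` is
nonempty, then every surviving path `r ∈ Sa` through node `i` becomes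
strictly more likely after the edge removal: `P̄_r > P_r`. -/
theorem surviving_paths_prob_increases
    {R : Type*} [Fintype R] [DecidableEq R]
    (U : R → ℝ) (S Sa : Finset R)
    (hS : S.Nonempty) (hSc : Sᶜ.Nonempty)
    (hSaS : Sa ⊆ S) (hSa : Sa.Nonempty)
    (m : ℕ) (hm : 2 ≤ m) (κ : ℝ) (hκ : 0 ≤ κ)
    (P : R → ℝ)
    (hP : ∀ r, P r = Real.exp (U r) / ∑ r' : R, Real.exp (U r'))
    (Δ : ℝ) (hΔ : Δ = κ * (Real.log ((m : ℝ) - 1) - Real.log (m : ℝ)))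
    (Ubar : R → ℝ)
    (hUbar₁ : ∀ r ∈ Sa, Ubar r = U r - Δ)
    (hUbar₂ : ∀ r ∈ Sᶜ, Ubar r = U r)
    (Pbar : R → ℝ)
    (hPbar : ∀ r ∈ Sa ∪ Sᶜ,
      Pbar r = Real.exp (Ubar r) / ∑ r' ∈ Sa ∪ Sᶜ, Real.exp (Ubar r'))
    (hcase : Sa ⊂ S ∨ (0 < κ ∧ Sᶜ.Nonempty)) :
    ∀ r ∈ Sa, P r < Pbar r := by
  intro r hr
  set A := ∑ x ∈ Sa, Real.exp (U x) with hAdef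
  set B := ∑ x ∈ S \ Sa, Real.exp (U x) with hBdef
  set C := ∑ x ∈ Sᶜ, Real.exp (U x) with hCdef
  set t := Real.exp (-Δ) with htdef
  have hm1 : (1:ℝ) ≤ (m:ℝ) - 1 := by
    have : (2:ℝ) ≤ (m:ℝ) := by exact_mod_cast hm
    linarith
  have hΔ0 : Δ ≤ 0 := by
    have hlog : Real.log ((m:ℝ) - 1) ≤ Real.log (m:ℝ) :=
      Real.log_le_log (by linarith) (by linarith)
    rw [hΔ]
    nlinarith
  have ht1 : 1 ≤ t := by
    rw [htdef, show (1:ℝ) = Real.exp 0 by simp]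
    exact Real.exp_le_exp.mpr (by linarith)
  have htpos : 0 < t := Real.exp_pos _
  have hA : 0 < A := Finset.sum_pos (fun _ _ => Real.exp_pos _) hSa
  have hC : 0 < C := Finset.sum_pos (fun _ _ => Real.exp_pos _) hSc
  have hB : 0 ≤ B := Finset.sum_nonneg (fun _ _ => (Real.exp_pos _).le)
  have hT : (∑ r' : R, Real.exp (U r')) = A + B + C := by
    rw [hAdef, hBdef, hCdef, ← Finset.sum_add_sum_compl S (fun x => Real.exp (U x)),
      ← Finset.sum_sdiff hSaS]
    ring
  have hdisj : Disjoint Sa Sᶜ := Finset.disjoint_left.mpr (fun x hx hxc => (Finset.mem_compl.mp hxc) (hSaS hx))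
  have hUnion : (∑ r' ∈ Sa ∪ Sᶜ, Real.exp (Ubar r')) = t * A + C := by
    rw [Finset.sum_union hdisj]
    congr 1
    · rw [hAdef, Finset.mul_sum]
      refine Finset.sum_congr rfl (fun x hx => ?_)
      rw [hUbar₁ x hx, sub_eq_add_neg, Real.exp_add, htdef]
      ring
    · exact Finset.sum_congr rfl (fun x hx => by rw [hUbar₂ x hx])
  have key : 0 < t * B + (t - 1) * C := by
    rcases hcase with hss | ⟨hκpos, _⟩
    · have hBpos : 0 < B := by
        obtain ⟨x, hxS, hxSa⟩ := Finset.exists_of_ssubset hss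
        exact Finset.sum_pos' (fun _ _ => (Real.exp_pos _).le)
          ⟨x, Finset.mem_sdiff.mpr ⟨hxS, hxSa⟩, Real.exp_pos _⟩
      nlinarith
    · have hΔneg : Δ < 0 := by
        have hlog : Real.log ((m:ℝ) - 1) < Real.log (m:ℝ) :=
          Real.log_lt_log (by linarith) (by linarith)
        rw [hΔ]
        nlinarith
      have ht1' : 1 < t := by
        rw [htdef, show (1:ℝ) = Real.exp 0 by simp]
        exact Real.exp_lt_exp.mpr (by linarith)
      nlinarith
  rw [hP r, hPbar r (Finset.mem_union_left _ hr), hUbar₁ r hr, hT, hUnion,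
    sub_eq_add_neg, Real.exp_add]
  rw [div_lt_div_iff₀ (by nlinarith) (by nlinarith)]
  have hE : 0 < Real.exp (U r) := Real.exp_pos _
  nlinarith
end

section
/- In the welfare setup, suppose that for every path r ∈ R the total penalty weight is positive, ∑_{i∈N} γ_{r,i} > 0. If κ', κ : N → ℝ satisfy κ'_i > κ_i > 0 for every node i ∈ N, then W(κ') < W(κ). (Proposition 2(a): welfare is strictly decreasing in the choice aversion parameters.) -/
open Real Finset

/-- **Proposition 2(a)**: welfare `W(κ) = log ∑_r exp(u_r − ∑_i κ_i γ_{r,i})`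
is strictly decreasing in the choice aversion parameters, provided every path
carries a positive total penalty weight. -/
theorem welfare_strictly_decreasing_in_kappa
    {R N : Type*} [Fintype R] [Fintype N] [Nonempty R]
    (u : R → ℝ) (γ : R → N → ℝ)
    (hγ : ∀ r i, 0 ≤ γ r i)
    (hpos : ∀ r, 0 < ∑ i : N, γ r i)
    (κ κ' : N → ℝ)
    (hκ : ∀ i, 0 < κ i) (hκκ' : ∀ i, κ i < κ' i) :
    Real.log (∑ r : R, Real.exp (u r - ∑ i : N, κ' i * γ r i)) <
      Real.log (∑ r : R, Real.exp (u r - ∑ i : N, κ i * γ r i)) := by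
  have key : ∀ r : R, ∑ i : N, κ i * γ r i < ∑ i : N, κ' i * γ r i := by
    intro r
    obtain ⟨i0, -, hi0⟩ : ∃ i ∈ Finset.univ, 0 < γ r i := by
      by_contra h
      push_neg at h
      have : ∑ i : N, γ r i ≤ 0 := Finset.sum_nonpos fun i hi => h i hi
      exact absurd (hpos r) (not_lt.2 this)
    apply Finset.sum_lt_sum
    · intro i _
      exact mul_le_mul_of_nonneg_right (hκκ' i).le (hγ r i)
    · exact ⟨i0, Finset.mem_univ i0, mul_lt_mul_of_pos_right (hκκ' i0) hi0⟩
  have hsum : ∑ r : R, Real.exp (u r - ∑ i : N, κ' i * γ r i) <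
      ∑ r : R, Real.exp (u r - ∑ i : N, κ i * γ r i) :=
    Finset.sum_lt_sum_of_nonempty Finset.univ_nonempty fun r _ =>
      Real.exp_lt_exp.2 (by linarith [key r])
  exact Real.log_lt_log (Finset.sum_pos (fun r _ => Real.exp_pos _) Finset.univ_nonempty) hsum
end

section
/- In the welfare setup with γ_{r,i} = log(m_i)·1[r ∈ R_i], for every node i ∈ N and every κ : N → ℝ, the one-variable function t ↦ W(κ[i := t]) (welfare as a function of the choice aversion parameter at node i, all others fixed) is differentiable at t = κ_i with derivative dW/dκ_i = −(∑_{r∈R_i} P_r(κ))·log m_i, where P_r(κ) = exp(u_r − ∑_{j∈N} κ_j γ_{r,j})/∑_{r'∈R} exp(u_{r'} − ∑_{j∈N} κ_j γ_{r',j}). In particular this derivative is nonpositive, and strictly negative when m_i ≥ 2 and R_i is nonempty. (Proposition 2(c).) -/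
open Real Finset

/-- **Proposition 2(c)**: with `γ_{r,i} = log(m_i)·1[r ∈ R_i]`, welfare as a
function of the choice aversion parameter at node `i` is differentiable with
derivative `−(∑_{r∈R_i} P_r(κ))·log m_i`; this derivative is nonpositive, and
strictly negative when `m_i ≥ 2` and `R_i` is nonempty. -/
theorem welfare_deriv_in_kappa
    {R N : Type*} [Fintype R] [DecidableEq R] [Fintype N] [DecidableEq N] [Nonempty R]
    (u : R → ℝ) (Ri : N → Finset R) (m : N → ℕ) (hm : ∀ j, 1 ≤ m j)
    (γ : R → N → ℝ)
    (hγ : ∀ r j, γ r j = if r ∈ Ri j then Real.log (m j) else 0)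
    (i : N) (κ : N → ℝ) :
    HasDerivAt
      (fun t : ℝ =>
        Real.log (∑ r : R,
          Real.exp (u r - ∑ j : N, Function.update κ i t j * γ r j)))
      (-(∑ r ∈ Ri i,
          Real.exp (u r - ∑ j : N, κ j * γ r j) /
            ∑ r' : R, Real.exp (u r' - ∑ j : N, κ j * γ r' j)) *
        Real.log (m i))
      (κ i) ∧
    (-(∑ r ∈ Ri i,
          Real.exp (u r - ∑ j : N, κ j * γ r j) /
            ∑ r' : R, Real.exp (u r' - ∑ j : N, κ j * γ r' j)) *
        Real.log (m i) ≤ 0) ∧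
    (2 ≤ m i → (Ri i).Nonempty →
      -(∑ r ∈ Ri i,
          Real.exp (u r - ∑ j : N, κ j * γ r j) /
            ∑ r' : R, Real.exp (u r' - ∑ j : N, κ j * γ r' j)) *
        Real.log (m i) < 0) := by
  classical
  set e : R → ℝ := fun r => u r - ∑ j : N, κ j * γ r j with he
  set S : ℝ := ∑ r' : R, Real.exp (e r') with hS
  have hSpos : 0 < S := Finset.sum_pos (fun r _ => Real.exp_pos _) Finset.univ_nonempty
  have key : ∀ (t : ℝ) (r : R),
      u r - ∑ j : N, Function.update κ i t j * γ r j = e r - (t - κ i) * γ r i := by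
    intro t r
    have hsplit : ∀ f : N → ℝ, ∑ j : N, f j = (∑ j ∈ Finset.univ.erase i, f j) + f i := by
      intro f
      rw [Finset.sum_erase_add _ _ (Finset.mem_univ i)]
    have h1 : ∑ j ∈ Finset.univ.erase i, Function.update κ i t j * γ r j
        = ∑ j ∈ Finset.univ.erase i, κ j * γ r j := by
      refine Finset.sum_congr rfl ?_
      intro j hj
      rw [Function.update_of_ne (Finset.mem_erase.mp hj).1]
    rw [hsplit (fun j => Function.update κ i t j * γ r j), h1, Function.update_self, he]
    simp only
    rw [hsplit (fun j => κ j * γ r j)]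
    ring
  have h1 : ∀ r : R,
      HasDerivAt (fun t : ℝ => Real.exp (u r - ∑ j : N, Function.update κ i t j * γ r j))
        (Real.exp (e r) * (-(γ r i))) (κ i) := by
    intro r
    have h2 : HasDerivAt (fun t : ℝ => e r - (t - κ i) * γ r i) (-(γ r i)) (κ i) := by
      have := (((hasDerivAt_id (κ i)).sub_const (κ i)).mul_const (γ r i)).const_sub (e r)
      simpa using this
    have h3 := h2.exp
    simp only [sub_self, zero_mul, sub_zero] at h3
    have hfun : (fun t : ℝ => Real.exp (u r - ∑ j : N, Function.update κ i t j * γ r j))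
        = fun t : ℝ => Real.exp (e r - (t - κ i) * γ r i) := by
      funext t; rw [key t r]
    rw [hfun]
    exact h3
  have hsum : HasDerivAt
      (fun t : ℝ => ∑ r : R, Real.exp (u r - ∑ j : N, Function.update κ i t j * γ r j))
      (∑ r : R, Real.exp (e r) * (-(γ r i))) (κ i) :=
    HasDerivAt.fun_sum (fun r _ => h1 r)
  have hfS : (∑ r : R, Real.exp (u r - ∑ j : N, Function.update κ i (κ i) j * γ r j)) = S := by
    rw [hS]
    refine Finset.sum_congr rfl fun r _ => ?_
    rw [key (κ i) r]
    simp
  have hlog : HasDerivAt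
      (fun t : ℝ => Real.log (∑ r : R, Real.exp (u r - ∑ j : N, Function.update κ i t j * γ r j)))
      ((∑ r : R, Real.exp (e r) * (-(γ r i))) / S) (κ i) := by
    have := hsum.log (by rw [hfS]; exact hSpos.ne')
    rwa [hfS] at this
  have hnum : ∑ r : R, Real.exp (e r) * (-(γ r i))
      = -((∑ r ∈ Ri i, Real.exp (e r)) * Real.log (m i)) := by
    have : ∀ r : R, Real.exp (e r) * (-(γ r i))
        = (if r ∈ Ri i then -(Real.exp (e r) * Real.log (m i)) else 0) := by
      intro r
      rw [hγ]
      by_cases h : r ∈ Ri i <;> simp [h]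
    rw [Finset.sum_congr rfl (fun r _ => this r), Finset.sum_ite_mem,
      Finset.univ_inter, Finset.sum_neg_distrib, ← Finset.sum_mul]
  have hDeq : (∑ r : R, Real.exp (e r) * (-(γ r i))) / S
      = -(∑ r ∈ Ri i, Real.exp (e r) / S) * Real.log (m i) := by
    rw [hnum, ← Finset.sum_div]
    ring
  have hd : HasDerivAt
      (fun t : ℝ => Real.log (∑ r : R, Real.exp (u r - ∑ j : N, Function.update κ i t j * γ r j)))
      (-(∑ r ∈ Ri i, Real.exp (e r) / S) * Real.log (m i)) (κ i) := hDeq ▸ hlog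
  have hlognn : 0 ≤ Real.log (m i) := by
    apply Real.log_nonneg
    exact_mod_cast hm i
  have hsumnn : 0 ≤ ∑ r ∈ Ri i, Real.exp (e r) / S :=
    Finset.sum_nonneg fun r _ => div_nonneg (Real.exp_pos _).le hSpos.le
  refine ⟨hd, ?_, ?_⟩
  · have := mul_nonneg hsumnn hlognn
    nlinarith
  · intro h2 hne
    have hlogpos : 0 < Real.log (m i) := by
      apply Real.log_pos
      exact_mod_cast h2
    have hsp : 0 < ∑ r ∈ Ri i, Real.exp (e r) / S :=
      Finset.sum_pos (fun r _ => div_pos (Real.exp_pos _) hSpos) hne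
    nlinarith
end

section
/- In the node-level link-addition setup, welfare strictly increases upon adding the new edge a', i.e. W̃ > W, if and only if the logit probability of the new edge exceeds the threshold determined by the choice aversion parameter: P(a'|A_i^+∪{a'}) > 1 − (m/(m+1))^κ. (Proposition 3.) -/
open Real Finset

/-- **Proposition 3**: in the node-level link-addition setup, adding the new
edge `a'` strictly increases welfare iff the logit probability of the new edge
exceeds `1 − (m/(m+1))^κ`. -/
theorem link_addition_welfare_iff
    {A : Type*} [Fintype A]
    (m : ℕ) (hm : 1 ≤ m) (hcard : Fintype.card A = m)
    (V : A → ℝ) (V' : ℝ) (κ : ℝ) (hκ : 0 ≤ κ)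
    (B C : ℝ) (hB : 0 < B) (hC : 0 ≤ C)
    (W Wnew : ℝ)
    (hW : W = Real.log (B * (∑ a : A, Real.exp (V a)) * (m : ℝ) ^ (-κ) + C))
    (hWnew : Wnew = Real.log
      (B * ((∑ a : A, Real.exp (V a)) + Real.exp V') * ((m : ℝ) + 1) ^ (-κ) + C)) :
    Wnew > W ↔
      Real.exp V' / ((∑ a : A, Real.exp (V a)) + Real.exp V') >
        1 - ((m : ℝ) / ((m : ℝ) + 1)) ^ κ := by
  have hA : Nonempty A := Fintype.card_pos_iff.mp (by rw [hcard]; exact hm)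
  set S := ∑ a : A, Real.exp (V a) with hSdef
  have hS : 0 < S := Finset.sum_pos (fun a _ => Real.exp_pos _) Finset.univ_nonempty
  have hE : 0 < Real.exp V' := Real.exp_pos _
  have hm0 : (0:ℝ) < m := by exact_mod_cast hm
  have hm1 : (0:ℝ) < (m:ℝ) + 1 := by linarith
  have hk1 : 0 < (m:ℝ) ^ κ := Real.rpow_pos_of_pos hm0 κ
  have hk2 : 0 < ((m:ℝ) + 1) ^ κ := Real.rpow_pos_of_pos hm1 κ
  have hSE : 0 < S + Real.exp V' := by linarith
  have hp1 : 0 < B * S * (m:ℝ) ^ (-κ) + C := by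
    nlinarith [mul_pos (mul_pos hB hS) (Real.rpow_pos_of_pos hm0 (-κ))]
  have hp2 : 0 < B * (S + Real.exp V') * ((m:ℝ) + 1) ^ (-κ) + C := by
    nlinarith [mul_pos (mul_pos hB hSE) (Real.rpow_pos_of_pos hm1 (-κ))]
  have key : (Wnew > W) ↔ S * ((m:ℝ)+1) ^ κ < (S + Real.exp V') * (m:ℝ) ^ κ := by
    rw [hW, hWnew, gt_iff_lt, Real.log_lt_log_iff hp1 hp2,
      Real.rpow_neg hm0.le, Real.rpow_neg hm1.le,
      add_lt_add_iff_right, mul_assoc, mul_assoc, mul_lt_mul_iff_right₀ hB,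
      ← div_eq_mul_inv, ← div_eq_mul_inv, div_lt_div_iff₀ hk1 hk2]
  rw [key, gt_iff_lt, Real.div_rpow hm0.le hm1.le, sub_lt_comm,
    show (1:ℝ) - Real.exp V' / (S + Real.exp V') = S / (S + Real.exp V') by
      field_simp; ring,
    div_lt_div_iff₀ hSE hk2, mul_comm ((m:ℝ)^κ) (S + Real.exp V')]
end

section
/- In the Braess choice-aversion example, for all u > 0, ε > 0 and κ ≥ 0: W̃ > W if and only if κ < log(1+e^ε)/log 2. Consequently, since log(1+e^ε)/log 2 > 1 for every ε > 0, adding the connecting edge strictly decreases welfare (W̃ < W, a Braess-type paradox without congestion) whenever κ > log(1+e^ε)/log 2. -/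
open Real

/-- Braess's paradox from choice aversion (Figure 7): adding the connecting
edge improves welfare iff `κ < log(1+e^ε)/log 2`; this threshold exceeds `1`,
and welfare strictly decreases whenever `κ > log(1+e^ε)/log 2`. -/
theorem braess_choice_aversion
    (u ε κ : ℝ) (hu : 0 < u) (hε : 0 < ε) (hκ : 0 ≤ κ)
    (W Wnew : ℝ)
    (hW : W = Real.log (2 * Real.exp (2 * u)))
    (hWnew : Wnew = Real.log
      (Real.exp (2 * u) + Real.exp (2 * u - κ * Real.log 2) +
        Real.exp (2 * u + ε - κ * Real.log 2))) :
    (Wnew > W ↔ κ < Real.log (1 + Real.exp ε) / Real.log 2) ∧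
    (1 < Real.log (1 + Real.exp ε) / Real.log 2) ∧
    (κ > Real.log (1 + Real.exp ε) / Real.log 2 → Wnew < W) := by
  have h2 : (0:ℝ) < Real.log 2 := Real.log_pos (by norm_num)
  have hA : (0:ℝ) < Real.exp (2 * u) := Real.exp_pos _
  have hB : (0:ℝ) < Real.exp (-(κ * Real.log 2)) := Real.exp_pos _
  have hEpos : (0:ℝ) < 1 + Real.exp ε := by positivity
  have hsum : Real.exp (2 * u) + Real.exp (2 * u - κ * Real.log 2) +
      Real.exp (2 * u + ε - κ * Real.log 2)
      = Real.exp (2 * u) * (1 + Real.exp (-(κ * Real.log 2)) * (1 + Real.exp ε)) := by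
    rw [show 2 * u - κ * Real.log 2 = 2 * u + -(κ * Real.log 2) by ring,
        show 2 * u + ε - κ * Real.log 2 = 2 * u + (ε + -(κ * Real.log 2)) by ring,
        Real.exp_add, Real.exp_add, Real.exp_add]
    ring
  -- key equivalence for exp(κ log 2) vs 1 + exp ε
  have hexp_iff : ∀ x : ℝ, (Real.exp x < 1 + Real.exp ε ↔ x < Real.log (1 + Real.exp ε)) :=
    fun x => (Real.lt_log_iff_exp_lt hEpos).symm
  have hspos : (0:ℝ) < Real.exp (2 * u) + Real.exp (2 * u - κ * Real.log 2) +
      Real.exp (2 * u + ε - κ * Real.log 2) := by positivity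
  have hiff : Wnew > W ↔ κ < Real.log (1 + Real.exp ε) / Real.log 2 := by
    rw [hW, hWnew, gt_iff_lt, Real.log_lt_log_iff (by positivity) hspos, hsum, lt_div_iff₀ h2]
    constructor
    · intro h
      have h1 : Real.exp (κ * Real.log 2) < 1 + Real.exp ε := by
        rw [show κ * Real.log 2 = -(-(κ * Real.log 2)) by ring, Real.exp_neg,
          inv_lt_iff_one_lt_mul₀ hB]
        nlinarith
      exact (hexp_iff _).mp h1
    · intro h
      have h1 : Real.exp (κ * Real.log 2) < 1 + Real.exp ε := (hexp_iff _).mpr h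
      have h2' : 1 < Real.exp (-(κ * Real.log 2)) * (1 + Real.exp ε) := by
        rw [show -(κ * Real.log 2) = -(κ * Real.log 2) by ring, Real.exp_neg]
        rw [inv_mul_eq_div, lt_div_iff₀ (Real.exp_pos _)]
        linarith
      nlinarith
  have hth : 1 < Real.log (1 + Real.exp ε) / Real.log 2 := by
    rw [lt_div_iff₀ h2, one_mul]
    apply Real.log_lt_log (by norm_num)
    have h1e : (1:ℝ) < Real.exp ε := by
      calc (1:ℝ) = Real.exp 0 := Real.exp_zero.symm
        _ < Real.exp ε := Real.exp_lt_exp.mpr hε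
    linarith
  refine ⟨hiff, hth, fun hk => ?_⟩
  rw [hW, hWnew, Real.log_lt_log_iff hspos (by positivity), hsum]
  rw [gt_iff_lt, div_lt_iff₀ h2] at hk
  have h1 : 1 + Real.exp ε < Real.exp (κ * Real.log 2) := by
    calc 1 + Real.exp ε = Real.exp (Real.log (1 + Real.exp ε)) := (Real.exp_log hEpos).symm
      _ < Real.exp (κ * Real.log 2) := Real.exp_lt_exp.mpr hk
  have h2' : Real.exp (-(κ * Real.log 2)) * (1 + Real.exp ε) < 1 := by
    rw [Real.exp_neg, inv_mul_eq_div, div_lt_one (Real.exp_pos _)]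
    exact h1
  nlinarith
end

section
/- In the parameterized Braess example, for every x ∈ ℝ and every κ ≥ 0: W_B > W_A (adding the free connecting edge is welfare-improving) if and only if κ < log(1 + e^{1−x})/log 2, equivalently κ < −log(e^{x−1}/(e^{x−1}+1))/log 2. In particular the threshold on κ is strictly decreasing in x. -/
open Real

private lemma key_ineq (x κ : ℝ) :
    Real.exp (-(x + 1) - κ * Real.log 2) + Real.exp (-(x + 1)) +
      Real.exp (-(2 * x) - κ * Real.log 2) > 2 * Real.exp (-(x + 1)) ↔
    Real.exp (κ * Real.log 2) < 1 + Real.exp (1 - x) := by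
  have hA := Real.exp_pos (-(x + 1))
  have hB := Real.exp_pos (κ * Real.log 2)
  have hE := Real.exp_pos (1 - x)
  have hP := Real.exp_pos (-(x + 1) - κ * Real.log 2)
  have hQ := Real.exp_pos (-(2 * x) - κ * Real.log 2)
  have e1 : Real.exp (-(x + 1) - κ * Real.log 2) * Real.exp (κ * Real.log 2)
      = Real.exp (-(x + 1)) := by rw [← Real.exp_add]; ring_nf
  have e2 : Real.exp (-(2 * x) - κ * Real.log 2) * Real.exp (κ * Real.log 2)
      = Real.exp (-(x + 1)) * Real.exp (1 - x) := by
    rw [← Real.exp_add, ← Real.exp_add]; ring_nf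
  constructor
  · intro h
    nlinarith [mul_pos (sub_pos.2 h) hB, mul_pos hA hE]
  · intro h
    nlinarith [mul_pos hA (sub_pos.2 h), mul_pos hA hE, mul_pos hP hB, mul_pos hQ hB]

/-- Parameterized Braess example (Appendix C): adding the free connecting edge
is welfare-improving iff `κ < log(1+e^{1−x})/log 2`, equivalently
`κ < −log(e^{x−1}/(e^{x−1}+1))/log 2`; the threshold is strictly decreasing
in `x`. -/
theorem braess_parameterized :
    (∀ x κ : ℝ, 0 ≤ κ →
      ∀ WA WB : ℝ,
        WA = Real.log (2 * Real.exp (-(x + 1))) →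
        WB = Real.log
          (Real.exp (-(x + 1) - κ * Real.log 2) + Real.exp (-(x + 1)) +
            Real.exp (-(2 * x) - κ * Real.log 2)) →
        (WB > WA ↔ κ < Real.log (1 + Real.exp (1 - x)) / Real.log 2)) ∧
    (∀ x : ℝ,
      Real.log (1 + Real.exp (1 - x)) / Real.log 2 =
        -Real.log (Real.exp (x - 1) / (Real.exp (x - 1) + 1)) / Real.log 2) ∧
    StrictAnti (fun x : ℝ => Real.log (1 + Real.exp (1 - x)) / Real.log 2) := by
  have hlog2 : (0:ℝ) < Real.log 2 := Real.log_pos (by norm_num)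
  refine ⟨?_, ?_, ?_⟩
  · intro x κ hκ WA WB hWA hWB
    subst hWA hWB
    have hSpos : (0:ℝ) < Real.exp (-(x + 1) - κ * Real.log 2) + Real.exp (-(x + 1)) +
        Real.exp (-(2 * x) - κ * Real.log 2) := by positivity
    have h2E : (0:ℝ) < 2 * Real.exp (-(x + 1)) := by positivity
    rw [gt_iff_lt, Real.log_lt_log_iff h2E hSpos, ← gt_iff_lt, key_ineq x κ,
      lt_div_iff₀ hlog2, ← Real.lt_log_iff_exp_lt (by positivity)]
  · intro x
    have h1 : (0:ℝ) < Real.exp (x - 1) + 1 := by positivity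
    have hkey : Real.log (Real.exp (x - 1) / (Real.exp (x - 1) + 1)) =
        -(Real.log (1 + Real.exp (1 - x))) := by
      have hprod : (Real.exp (x - 1) + 1) * Real.exp (1 - x) = 1 + Real.exp (1 - x) := by
        rw [add_mul, ← Real.exp_add]; ring_nf; rw [Real.exp_zero]
      rw [Real.log_div (Real.exp_ne_zero _) h1.ne', Real.log_exp, ← hprod,
        Real.log_mul h1.ne' (Real.exp_ne_zero _), Real.log_exp]
      ring
    rw [hkey, neg_neg]
  · intro a b hab
    have hlt : Real.log (1 + Real.exp (1 - b)) < Real.log (1 + Real.exp (1 - a)) := by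
      apply Real.log_lt_log (by positivity)
      have : Real.exp (1 - b) < Real.exp (1 - a) := Real.exp_lt_exp.2 (by linarith)
      linarith
    exact (div_lt_div_iff_of_pos_right hlog2).2 hlt
end
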